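/- Let p ≥ 2 and α₁, α₂ ∈ {1, …, p} be integers, and let s₁ = (α₁ + α₂) mod p. Then α₁(p − α₁) + α₂(p − α₂) ≥ s₁(p − s₁). -/
import Mathlib

/-- For an integer `p ≥ 2` and `α₁, α₂ ∈ [1, p]`, with `s₁ = (α₁ + α₂) mod p`,
`α₁(p − α₁) + α₂(p − α₂) ≥ s₁(p − s₁)`. -/
theorem stmt_1 (p α₁ α₂ s₁ : ℤ) (hp : 2 ≤ p)
    (h1 : 1 ≤ α₁) (h1' : α₁ ≤ p) (h2 : 1 ≤ α₂) (h2' : α₂ ≤ p)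
    (hs : s₁ = (α₁ + α₂) % p) :
    s₁ * (p - s₁) ≤ α₁ * (p - α₁) + α₂ * (p - α₂) := by
  subst hs
  have key : (α₁ + α₂) % p = α₁ + α₂ ∨ (α₁ + α₂) % p = α₁ + α₂ - p ∨ (α₁ + α₂) % p = α₁ + α₂ - 2*p := by
    rcases lt_or_ge (α₁ + α₂) p with h | h
    · exact Or.inl (Int.emod_eq_of_lt (by omega) h)
    rcases lt_or_ge (α₁ + α₂) (2*p) with h' | h'
    · refine Or.inr (Or.inl ?_)
      rw [Int.emod_eq_sub_self_emod]
      exact Int.emod_eq_of_lt (by omega) (by omega)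
    · refine Or.inr (Or.inr ?_)
      rw [Int.emod_eq_sub_self_emod, Int.emod_eq_sub_self_emod]
      rw [Int.emod_eq_of_lt (by omega) (by omega)]
      ring
  rcases key with h | h | h <;> rw [h] <;> nlinarith [mul_nonneg (le_of_lt (lt_of_lt_of_le zero_lt_one h1)) (le_of_lt (lt_of_lt_of_le zero_lt_one h2)), mul_nonneg (sub_nonneg.2 h1') (sub_nonneg.2 h2')]
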